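/- Let A be a real m×n matrix with nonzero rows a_1^T,…,a_m^T, let w_1,…,w_m be real weights, and let p_1,…,p_m be a probability distribution on {1,…,m}. Let τ be a tuple of η indices drawn i.i.d. from {1,…,m} with probabilities p_i, and define the random matrix M = (1/η) Σ_{i∈τ} w_i e_i e_i^T / ‖a_i‖₂². Then E[(A^T M)^T (A^T M)] = (1/η) P W² D^{-2} + (1 − 1/η) P W D^{-2} A A^T P W D^{-2}, where P = Diag(p_1,…,p_m), W = Diag(w_1,…,w_m) and D = Diag(‖a_1‖₂,…,‖a_m‖₂). -/

import Mathlib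

open Matrix Finset

noncomputable section

/-- Euclidean dot product of two vectors. -/
def dot {n : ℕ} (x y : Fin n → ℝ) : ℝ := ∑ j, x j * y j

/-- Squared Euclidean norm of a vector. -/
def norm2Sq {n : ℕ} (x : Fin n → ℝ) : ℝ := ∑ j, x j ^ 2

/-- ℓ¹ norm of a vector. -/
def l1Norm {n : ℕ} (x : Fin n → ℝ) : ℝ := ∑ j, |x j|

/-- Squared Euclidean norm of the i-th row of a matrix. -/
def rowNormSq {m n : ℕ} (A : Matrix (Fin m) (Fin n) ℝ) (i : Fin m) : ℝ := ∑ j, A i j ^ 2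

/-- Squared Frobenius norm of a matrix. -/
def frobSq {m n : ℕ} (A : Matrix (Fin m) (Fin n) ℝ) : ℝ := ∑ i, ∑ j, A i j ^ 2

/-- Largest singular value (spectral norm) of a matrix:  sup over `x ≠ 0` of `‖Ax‖₂/‖x‖₂`. -/
def sigmaMax {m n : ℕ} (A : Matrix (Fin m) (Fin n) ℝ) : ℝ :=
  sSup {t : ℝ | ∃ x : Fin n → ℝ, x ≠ 0 ∧
    t = Real.sqrt (norm2Sq (A.mulVec x)) / Real.sqrt (norm2Sq x)}

/-- `σ̃_min(A)`: the minimum over nonzero column-submatrices `A_J` of the smallest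
singular value `σ_min(A_J) = min_{x ≠ 0, supp x ⊆ J} ‖Ax‖₂/‖x‖₂`. -/
def sigmaTildeMin {m n : ℕ} (A : Matrix (Fin m) (Fin n) ℝ) : ℝ :=
  sInf {t : ℝ | ∃ J : Finset (Fin n), (∃ i j, j ∈ J ∧ A i j ≠ 0) ∧
    ∃ x : Fin n → ℝ, x ≠ 0 ∧ (∀ j ∉ J, x j = 0) ∧
      t = Real.sqrt (norm2Sq (A.mulVec x)) / Real.sqrt (norm2Sq x)}

/-- `|x|_min`: the smallest absolute value of the nonzero entries of `x`. -/
def minAbs {n : ℕ} (x : Fin n → ℝ) : ℝ := sInf {t : ℝ | ∃ j, x j ≠ 0 ∧ t = |x j|}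

/-- Componentwise soft shrinkage operator `S_λ(x) = max{|x| - λ, 0}·sign(x)`. -/
def softShrink {n : ℕ} (lam : ℝ) (x : Fin n → ℝ) : Fin n → ℝ :=
  fun j => Real.sign (x j) * max (|x j| - lam) 0

/-- The objective `f(x) = λ‖x‖₁ + ½‖x‖₂²`. -/
def fObj {n : ℕ} (lam : ℝ) (x : Fin n → ℝ) : ℝ := lam * l1Norm x + norm2Sq x / 2

/-- `g` is a subgradient of `f` at `x`. -/
def IsSubgrad {n : ℕ} (f : (Fin n → ℝ) → ℝ) (x g : Fin n → ℝ) : Prop :=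
  ∀ y, f x + dot g (y - x) ≤ f y

/-- Bregman distance `D_f^{x*}(x, y) = f(y) - f(x) - ⟨x*, y - x⟩`. -/
def breg {n : ℕ} (f : (Fin n → ℝ) → ℝ) (xstar x y : Fin n → ℝ) : ℝ :=
  f y - f x - dot xstar (y - x)

/-- The random weighted sampling matrix `M = (1/η) Σ_{i∈τ} w_i e_i e_iᵀ / ‖a_i‖₂²`
associated with a tuple `τ` of `η` sampled row indices. -/
def Mmat {m n : ℕ} (A : Matrix (Fin m) (Fin n) ℝ) (w : Fin m → ℝ) (η : ℕ)
    (τ : Fin η → Fin m) : Matrix (Fin m) (Fin m) ℝ :=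
  (η : ℝ)⁻¹ • ∑ t, (w (τ t) / rowNormSq A (τ t)) • Matrix.single (τ t) (τ t) (1 : ℝ)

lemma Mmat_eq_diagonal {m n η : ℕ} (A : Matrix (Fin m) (Fin n) ℝ) (w : Fin m → ℝ)
    (τ : Fin η → Fin m) :
    Mmat A w η τ = Matrix.diagonal (fun i =>
      (η : ℝ)⁻¹ * (w i / rowNormSq A i) * ∑ t, if τ t = i then (1:ℝ) else 0) := by
  ext i j
  simp only [Mmat, Matrix.smul_apply, Matrix.sum_apply, Matrix.single,
    Matrix.diagonal, Matrix.of_apply, smul_eq_mul]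
  rcases eq_or_ne i j with rfl | hij
  · simp only [if_pos rfl, Finset.mul_sum, mul_ite, mul_one, mul_zero]
    congr 1; ext t
    by_cases h : τ t = i
    · simp [h]
    · simp [h, fun hh : τ t = i ∧ τ t = i => h hh.1]
  · rw [if_neg hij]
    rw [Finset.sum_eq_zero, mul_zero]
    intro t _
    have : ¬(τ t = i ∧ τ t = j) := fun ⟨h1, h2⟩ => hij (h1 ▸ h2 ▸ rfl)
    simp [this]

lemma sum_prod_swap {η m : ℕ} (g : Fin η → Fin m → ℝ) :
    ∑ τ : Fin η → Fin m, ∏ u, g u (τ u) = ∏ u, ∑ k, g u k := by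
  rw [Finset.prod_univ_sum, Fintype.piFinset_univ]

lemma pair_sum {m η : ℕ} (p : Fin m → ℝ) (hp1 : ∑ i, p i = 1) (i j : Fin m) (s t : Fin η) :
    ∑ τ : Fin η → Fin m, (∏ u, p (τ u)) *
        ((if τ s = i then (1:ℝ) else 0) * (if τ t = j then (1:ℝ) else 0))
      = if s = t then (if i = j then p i else 0) else p i * p j := by
  have key : ∀ τ : Fin η → Fin m,
      (∏ u, p (τ u)) * ((if τ s = i then (1:ℝ) else 0) * (if τ t = j then (1:ℝ) else 0))
      = ∏ u, (p (τ u) * ((if s = u then (if τ u = i then (1:ℝ) else 0) else 1) *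
          (if t = u then (if τ u = j then (1:ℝ) else 0) else 1))) := by
    intro τ
    rw [Finset.prod_mul_distrib, Finset.prod_mul_distrib, Finset.prod_ite_eq,
      Finset.prod_ite_eq]
    simp
  simp_rw [key]
  rw [sum_prod_swap (fun u k => p k * ((if s = u then (if k = i then (1:ℝ) else 0) else 1) *
      (if t = u then (if k = j then (1:ℝ) else 0) else 1)))]
  have hpi : ∑ k, (if k = i then p k else 0) = p i := by
    rw [Finset.sum_ite_eq']; simp
  rcases eq_or_ne s t with rfl | hst
  · simp only [if_pos rfl]
    have hfac : ∀ u : Fin η, (∑ k, p k * ((if s = u then (if k = i then (1:ℝ) else 0) else 1) *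
        (if s = u then (if k = j then (1:ℝ) else 0) else 1)))
        = if s = u then (if i = j then p i else 0) else 1 := by
      intro u
      by_cases h : s = u
      · simp only [if_pos h]
        rcases eq_or_ne i j with rfl | hij
        · simp only [if_pos rfl]
          calc ∑ k, p k * ((if k = i then (1:ℝ) else 0) * (if k = i then (1:ℝ) else 0))
              = ∑ k, (if k = i then p k else 0) := by
                apply Finset.sum_congr rfl; intro k _; by_cases hk : k = i <;> simp [hk]
            _ = p i := hpi
        · rw [if_neg hij, Finset.sum_eq_zero]
          intro k _
          by_cases hk : k = i
          · simp [hk, hij]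
          · simp [hk]
      · simp [h, hp1]
    simp_rw [hfac]
    rw [Finset.prod_ite_eq]
    simp
  · rw [if_neg hst]
    have hfac : ∀ u : Fin η, (∑ k, p k * ((if s = u then (if k = i then (1:ℝ) else 0) else 1) *
        (if t = u then (if k = j then (1:ℝ) else 0) else 1)))
        = (if s = u then p i else 1) * (if t = u then p j else 1) := by
      intro u
      by_cases hs : s = u
      · have ht : t ≠ u := fun h => hst (hs.trans h.symm)
        simp only [if_pos hs, if_neg ht, mul_one, one_mul]
        calc ∑ k, p k * (if k = i then (1:ℝ) else 0)
            = ∑ k, (if k = i then p k else 0) := by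
              apply Finset.sum_congr rfl; intro k _; by_cases hk : k = i <;> simp [hk]
          _ = p i := hpi
      · by_cases ht : t = u
        · simp only [if_neg hs, if_pos ht, one_mul]
          calc ∑ k, p k * (if k = j then (1:ℝ) else 0)
              = ∑ k, (if k = j then p k else 0) := by
                apply Finset.sum_congr rfl; intro k _; by_cases hk : k = j <;> simp [hk]
            _ = p j := by rw [Finset.sum_ite_eq']; simp
        · simp [hs, ht, hp1]
    simp_rw [hfac]
    rw [Finset.prod_mul_distrib, Finset.prod_ite_eq, Finset.prod_ite_eq]
    simp

lemma st_sum {η : ℕ} (D E : ℝ) :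
    ∑ s : Fin η, ∑ t : Fin η, (if s = t then D else E)
      = (η : ℝ) * D + (η : ℝ) * ((η : ℝ) - 1) * E := by
  have h1 : ∀ s : Fin η, ∑ t : Fin η, (if s = t then D else E) = (η : ℝ) * E + (D - E) := by
    intro s
    have : ∀ t : Fin η, (if s = t then D else E) = E + (if s = t then D - E else 0) := by
      intro t; by_cases h : s = t <;> simp [h]
    simp_rw [this]
    rw [Finset.sum_add_distrib, Finset.sum_ite_eq, Finset.sum_const]
    simp [Finset.card_univ, mul_comm]
  simp_rw [h1]
  rw [Finset.sum_const]
  simp [Finset.card_univ]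
  ring

lemma triple_comm {α β γ : Type*} [Fintype α] [Fintype β] [Fintype γ] (F : α → β → γ → ℝ) :
    ∑ a : α, ∑ b : β, ∑ c : γ, F a b c = ∑ b : β, ∑ c : γ, ∑ a : α, F a b c := by
  rw [Finset.sum_comm]
  apply Finset.sum_congr rfl
  intro b _
  rw [Finset.sum_comm]

theorem second_moment_of_sampling_matrix {m n η : ℕ} (hη : 0 < η)
    (A : Matrix (Fin m) (Fin n) ℝ) (hA : ∀ i, A i ≠ 0)
    (w p : Fin m → ℝ) (hp0 : ∀ i, 0 ≤ p i) (hp1 : ∑ i, p i = 1) :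
    ∑ τ : Fin η → Fin m, (∏ t, p (τ t)) • ((Aᵀ * Mmat A w η τ)ᵀ * (Aᵀ * Mmat A w η τ))
      = (η : ℝ)⁻¹ • Matrix.diagonal (fun i => p i * w i ^ 2 / rowNormSq A i)
        + (1 - (η : ℝ)⁻¹) •
          (Matrix.diagonal (fun i => p i * w i / rowNormSq A i) * A * Aᵀ *
            Matrix.diagonal (fun i => p i * w i / rowNormSq A i)) := by
  have hηR : (η : ℝ) ≠ 0 := Nat.cast_ne_zero.mpr hη.ne'
  have hRpos : ∀ i, rowNormSq A i ≠ 0 := by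
    intro i
    obtain ⟨j, hj⟩ := Function.ne_iff.mp (hA i)
    have : 0 < rowNormSq A i := by
      apply Finset.sum_pos' (fun k _ => sq_nonneg _) ⟨j, Finset.mem_univ j, pow_two_pos_of_ne_zero hj⟩
    exact this.ne'
  -- per-τ matrix identity
  have hmat : ∀ τ : Fin η → Fin m,
      (Aᵀ * Mmat A w η τ)ᵀ * (Aᵀ * Mmat A w η τ)
        = Matrix.diagonal (fun i =>
            (η : ℝ)⁻¹ * (w i / rowNormSq A i) * ∑ t, if τ t = i then (1:ℝ) else 0)
          * (A * Aᵀ) * Matrix.diagonal (fun i =>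
            (η : ℝ)⁻¹ * (w i / rowNormSq A i) * ∑ t, if τ t = i then (1:ℝ) else 0) := by
    intro τ
    rw [Matrix.transpose_mul, Matrix.transpose_transpose, Mmat_eq_diagonal,
      Matrix.diagonal_transpose, ← Matrix.mul_assoc, Matrix.mul_assoc (Matrix.diagonal _) A Aᵀ]
  ext i j
  rw [Matrix.sum_apply]
  simp_rw [Matrix.smul_apply, hmat, Matrix.mul_diagonal, Matrix.diagonal_mul, smul_eq_mul]
  -- expand each τ-term into a double sum over s,t
  have step1 : ∀ τ : Fin η → Fin m,
      (∏ u, p (τ u)) *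
        ((η : ℝ)⁻¹ * (w i / rowNormSq A i) * (∑ s, if τ s = i then (1:ℝ) else 0) *
          (A * Aᵀ) i j *
          ((η : ℝ)⁻¹ * (w j / rowNormSq A j) * ∑ t, if τ t = j then (1:ℝ) else 0))
      = ∑ s, ∑ t, ((η : ℝ)⁻¹ * (w i / rowNormSq A i) * ((η : ℝ)⁻¹ * (w j / rowNormSq A j)) *
          (A * Aᵀ) i j) *
          ((∏ u, p (τ u)) * ((if τ s = i then (1:ℝ) else 0) * (if τ t = j then (1:ℝ) else 0))) := by
    intro τ
    rw [show (∏ u, p (τ u)) *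
        ((η : ℝ)⁻¹ * (w i / rowNormSq A i) * (∑ s, if τ s = i then (1:ℝ) else 0) *
          (A * Aᵀ) i j *
          ((η : ℝ)⁻¹ * (w j / rowNormSq A j) * ∑ t, if τ t = j then (1:ℝ) else 0))
        = ((η : ℝ)⁻¹ * (w i / rowNormSq A i) * ((η : ℝ)⁻¹ * (w j / rowNormSq A j)) *
            (A * Aᵀ) i j) *
          (((∑ s, if τ s = i then (1:ℝ) else 0) * (∑ t, if τ t = j then (1:ℝ) else 0)) *
            (∏ u, p (τ u))) from by ring]
    rw [Finset.sum_mul_sum]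
    rw [Finset.sum_mul, Finset.mul_sum]
    apply Finset.sum_congr rfl; intro s _
    rw [Finset.sum_mul, Finset.mul_sum]
    apply Finset.sum_congr rfl; intro t _
    ring
  simp_rw [step1]
  rw [triple_comm]
  simp_rw [← Finset.mul_sum]
  simp_rw [pair_sum p hp1 i j]
  rw [st_sum]
  -- now pure scalar computation
  have hGii : (A * Aᵀ) i i = rowNormSq A i := by
    simp [Matrix.mul_apply, rowNormSq, sq]
  rw [Matrix.add_apply, Matrix.smul_apply, Matrix.smul_apply, Matrix.diagonal_apply,
    Matrix.mul_diagonal, Matrix.mul_assoc (Matrix.diagonal _) A Aᵀ, Matrix.diagonal_mul,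
    smul_eq_mul, smul_eq_mul]
  rcases eq_or_ne i j with rfl | hij
  · rw [if_pos rfl, if_pos rfl, hGii]
    have hR := hRpos i
    field_simp
  · rw [if_neg hij, if_neg hij]
    have hRi := hRpos i
    have hRj := hRpos j
    field_simp
    ring
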